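/- arXiv:2311.09202 — 4 statements merged into one kernel-verified Lean document; each statement's English description precedes it below -/
import Mathlib

section
/- Let n be a natural number and δ > 0. Suppose ξ₁,…,ξₙ are linearly independent unit vectors in a Hilbert space H such that |⟨ξⱼ, ξₖ⟩| ≤ δ for all distinct j,k ∈ {1,…,n}. Then there exists an orthonormal list ϑ₁,…,ϑₙ in H such that ‖ξⱼ − ϑⱼ‖ ≤ δn for all j ∈ {1,…,n} and span(ξ₁,…,ξₙ) = span(ϑ₁,…,ϑₙ). -/
open Matrix Finset
open scoped ComplexOrder

section Aux

variable {H : Type*} [NormedAddCommGroup H] [InnerProductSpace ℂ H]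

local notation "⟪" x ", " y "⟫" => @inner ℂ H _ x y

/-- inner product of matrix-combinations of a family. -/
lemma comb_inner {n : ℕ} (ξ : Fin n → H) (A B : Matrix (Fin n) (Fin n) ℂ) (i j : Fin n) :
    ⟪∑ k, A k i • ξ k, ∑ l, B l j • ξ l⟫ =
      (Aᴴ * (Matrix.of fun k l => ⟪ξ k, ξ l⟫) * B) i j := by
  simp only [sum_inner, inner_sum, inner_smul_left, inner_smul_right, Matrix.mul_apply,
    Matrix.conjTranspose_apply, Matrix.of_apply, Finset.sum_mul, Finset.mul_sum]
  refine Finset.sum_congr rfl fun k _ => Finset.sum_congr rfl fun l _ => ?_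
  rw [Complex.star_def]
  ring

/-- combination of combinations. -/
lemma comb_comb {n : ℕ} (ξ : Fin n → H) (A B : Matrix (Fin n) (Fin n) ℂ) (j : Fin n) :
    ∑ k, B k j • (∑ l, A l k • ξ l) = ∑ l, (A * B) l j • ξ l := by
  simp only [Finset.smul_sum, Matrix.mul_apply, Finset.sum_smul, smul_smul]
  rw [Finset.sum_comm]
  refine Finset.sum_congr rfl fun l _ => Finset.sum_congr rfl fun k _ => ?_
  rw [mul_comm]

lemma comb_one {n : ℕ} (ξ : Fin n → H) (j : Fin n) :
    ∑ k, (1 : Matrix (Fin n) (Fin n) ℂ) k j • ξ k = ξ j := by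
  simp [Matrix.one_apply, ite_smul]

end Aux

/-- approximately orthonormal families of linearly independent unit
vectors can be repaired to exactly orthonormal families with the same span. -/
theorem stmt0 {H : Type*} [NormedAddCommGroup H] [InnerProductSpace ℂ H] [CompleteSpace H]
    (n : ℕ) (δ : ℝ) (hδ : 0 < δ) (ξ : Fin n → H)
    (hind : LinearIndependent ℂ ξ) (hunit : ∀ j, ‖ξ j‖ = 1)
    (hsmall : ∀ j k, j ≠ k → ‖(@inner ℂ H _ (ξ j) (ξ k))‖ ≤ δ) :
    ∃ ϑ : Fin n → H, Orthonormal ℂ ϑ ∧ (∀ j, ‖ξ j - ϑ j‖ ≤ δ * n) ∧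
      Submodule.span ℂ (Set.range ξ) = Submodule.span ℂ (Set.range ϑ) := by
  classical
  -- the Gram matrix
  set G : Matrix (Fin n) (Fin n) ℂ := Matrix.of fun k l => @inner ℂ H _ (ξ k) (ξ l) with hGdef
  have hGh : G.IsHermitian := by
    ext i j
    simp [hGdef, Matrix.conjTranspose_apply, inner_conj_symm]
  -- positivity of the Gram matrix
  have hPD : G.PosDef := by
    refine Matrix.PosDef.of_dotProduct_mulVec_pos hGh fun x hx => ?_
    have hy : (∑ i, x i • ξ i) ≠ 0 := by
      intro h
      exact hx (funext fun i => Fintype.linearIndependent_iff.mp hind x h i)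
    have hdot : dotProduct (star x) (G *ᵥ x) =
        @inner ℂ H _ (∑ i, x i • ξ i) (∑ j, x j • ξ j) := by
      simp only [dotProduct, Matrix.mulVec, dotProduct, Pi.star_apply, sum_inner, inner_sum,
        inner_smul_left, inner_smul_right, hGdef, Matrix.of_apply, Finset.mul_sum]
      rw [Finset.sum_comm]
      refine Finset.sum_congr rfl fun i _ => Finset.sum_congr rfl fun j _ => ?_
      simp only [Complex.star_def]
      ring
    rw [hdot, inner_self_eq_norm_sq_to_K]
    have h1 : (0:ℝ) < ‖∑ i, x i • ξ i‖ ^ 2 := pow_pos (norm_pos_iff.mpr hy) 2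
    exact lt_of_lt_of_eq (Complex.zero_lt_real.mpr h1) (by norm_cast)
  -- unitary diagonalization
  set U : Matrix (Fin n) (Fin n) ℂ := (hGh.eigenvectorUnitary : Matrix (Fin n) (Fin n) ℂ)
    with hUdef
  have hUU : U * star U = 1 := Matrix.mem_unitaryGroup_iff.mp hGh.eigenvectorUnitary.2
  have hU'U : star U * U = 1 := Matrix.mem_unitaryGroup_iff'.mp hGh.eigenvectorUnitary.2
  set lam : Fin n → ℝ := hGh.eigenvalues with hlamdef
  have hlam_pos : ∀ i, 0 < lam i := fun i => hPD.eigenvalues_pos i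
  have hsqrt_pos : ∀ i, 0 < Real.sqrt (lam i) := fun i => Real.sqrt_pos.mpr (hlam_pos i)
  have hsqrt_ne : ∀ i, (Real.sqrt (lam i) : ℂ) ≠ 0 :=
    fun i => Complex.ofReal_ne_zero.mpr (ne_of_gt (hsqrt_pos i))
  -- Gershgorin: eigenvalues are within δ * n of 1
  have hGdiag : ∀ k, G k k = 1 := fun k => by
    rw [hGdef]
    simp only [Matrix.of_apply]
    rw [inner_self_eq_norm_sq_to_K, hunit k]
    norm_num
  have hlam_near : ∀ i, |lam i - 1| ≤ δ * n := by
    intro i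
    have hev : Module.End.HasEigenvalue (Matrix.toLin' G) ((lam i : ℝ) : ℂ) := by
      apply Module.End.hasEigenvalue_of_hasEigenvector (x := ⇑(hGh.eigenvectorBasis i))
      constructor
      · rw [Module.End.mem_eigenspace_iff, Matrix.toLin'_apply, hGh.mulVec_eigenvectorBasis]
        ext j
        simp [Complex.real_smul, hlamdef]
      · intro h
        apply hGh.eigenvectorBasis.orthonormal.ne_zero i
        ext j
        exact congrFun h j
    obtain ⟨k, hk⟩ := eigenvalue_mem_ball hev
    rw [Metric.mem_closedBall, hGdiag k] at hk
    have h1 : dist ((lam i : ℝ) : ℂ) 1 = |lam i - 1| := by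
      rw [Complex.dist_eq]
      rw [show ((lam i : ℝ) : ℂ) - 1 = ((lam i - 1 : ℝ) : ℂ) by push_cast; ring]
      exact (Complex.norm_real _).trans (Real.norm_eq_abs _)
    have h2 : ∑ j ∈ Finset.univ.erase k, ‖G k j‖ ≤ δ * n := by
      calc ∑ j ∈ Finset.univ.erase k, ‖G k j‖ ≤ ∑ _j ∈ Finset.univ.erase k, δ := by
            refine Finset.sum_le_sum fun j hj => ?_
            have hjk : k ≠ j := (Finset.ne_of_mem_erase hj).symm
            exact le_trans (le_of_eq rfl) (hsmall k j hjk)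
        _ = (Finset.univ.erase k).card • δ := (Finset.sum_const δ)
        _ ≤ δ * n := by
            rw [nsmul_eq_mul]
            have hcard : ((Finset.univ.erase k).card : ℝ) ≤ (n : ℝ) := by
              have := Finset.card_erase_le (a := k) (s := (Finset.univ : Finset (Fin n)))
              calc ((Finset.univ.erase k).card : ℝ) ≤ ((Finset.univ : Finset (Fin n)).card : ℝ) := by
                    exact_mod_cast this
                _ = n := by simp
            nlinarith
    rw [← h1]
    exact hk.trans h2
  have hsq_near : ∀ i, |Real.sqrt (lam i) - 1| ≤ δ * n := by
    intro i
    have h0 : 0 ≤ lam i := (hlam_pos i).le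
    have hs := Real.sq_sqrt h0
    have key : |Real.sqrt (lam i) - 1| ≤ |lam i - 1| := by
      have h2 : (Real.sqrt (lam i) - 1) * (Real.sqrt (lam i) + 1) = lam i - 1 := by
        nlinarith
      calc |Real.sqrt (lam i) - 1| ≤ |Real.sqrt (lam i) - 1| * (Real.sqrt (lam i) + 1) := by
            nlinarith [abs_nonneg (Real.sqrt (lam i) - 1), Real.sqrt_nonneg (lam i)]
        _ = |(Real.sqrt (lam i) - 1) * (Real.sqrt (lam i) + 1)| := by
            rw [abs_mul, abs_of_nonneg (by nlinarith [Real.sqrt_nonneg (lam i)] : (0:ℝ) ≤ Real.sqrt (lam i) + 1)]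
        _ = |lam i - 1| := by rw [h2]
    exact key.trans (hlam_near i)
  -- the matrices d = G^{1/2}-diagonal, dinv = G^{-1/2}-diagonal (in the eigenbasis)
  set D : Matrix (Fin n) (Fin n) ℂ := Matrix.diagonal (RCLike.ofReal ∘ lam) with hDdef
  set d : Matrix (Fin n) (Fin n) ℂ := Matrix.diagonal (fun i => (Real.sqrt (lam i) : ℂ)) with hddef
  set dinv : Matrix (Fin n) (Fin n) ℂ :=
    Matrix.diagonal (fun i => ((Real.sqrt (lam i) : ℂ))⁻¹) with hdinvdef
  set S : Matrix (Fin n) (Fin n) ℂ := U * dinv * star U with hSdef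
  set T : Matrix (Fin n) (Fin n) ℂ := U * d * star U with hTdef
  have hmul : ∀ E E' : Matrix (Fin n) (Fin n) ℂ,
      (U * E * star U) * (U * E' * star U) = U * (E * E') * star U := by
    intro E E'
    simp only [Matrix.mul_assoc]
    rw [← Matrix.mul_assoc (star U) U (E' * star U), hU'U, Matrix.one_mul]
  have hdinv_d : dinv * d = 1 := by
    rw [hdinvdef, hddef, Matrix.diagonal_mul_diagonal, ← Matrix.diagonal_one]
    exact congrArg Matrix.diagonal (funext fun i => inv_mul_cancel₀ (hsqrt_ne i))
  have hdinvDdinv : dinv * D * dinv = 1 := by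
    rw [hdinvdef, hDdef, Matrix.diagonal_mul_diagonal, Matrix.diagonal_mul_diagonal,
      ← Matrix.diagonal_one]
    refine congrArg Matrix.diagonal (funext fun i => ?_)
    show ((Real.sqrt (lam i) : ℂ))⁻¹ * (lam i : ℂ) * ((Real.sqrt (lam i) : ℂ))⁻¹ = 1
    have hl : (lam i : ℂ) = (Real.sqrt (lam i) : ℂ) * (Real.sqrt (lam i) : ℂ) := by
      rw [← Complex.ofReal_mul, Real.mul_self_sqrt (hlam_pos i).le]
    have hne := hsqrt_ne i
    rw [hl]
    field_simp
  have hSherm : Sᴴ = S := by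
    rw [hSdef]
    rw [Matrix.conjTranspose_mul, Matrix.conjTranspose_mul, Matrix.diagonal_conjTranspose]
    rw [Matrix.star_eq_conjTranspose, Matrix.conjTranspose_conjTranspose]
    rw [show (star (fun i => ((Real.sqrt (lam i) : ℂ))⁻¹)) = fun i => ((Real.sqrt (lam i) : ℂ))⁻¹ by
      funext i
      simp [Pi.star_apply, star_inv₀, Complex.star_def, Complex.conj_ofReal]]
    rw [← Matrix.star_eq_conjTranspose U, Matrix.mul_assoc]
  have hspec : G = U * D * star U := hGh.spectral_theorem
  -- the repaired family
  set ϑ : Fin n → H := fun j => ∑ k, S k j • ξ k with hθdef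
  -- orthonormality
  have hSGS : Sᴴ * G * S = 1 := by
    rw [hSherm, hspec, hSdef, hmul, hmul, hdinvDdinv, Matrix.mul_one, hUU]
  have hON : Orthonormal ℂ ϑ := by
    rw [orthonormal_iff_ite]
    intro i j
    rw [hθdef]
    rw [comb_inner ξ S S i j, ← hGdef, hSGS, Matrix.one_apply]
  -- norm estimate
  have hdist : ∀ j, ‖ξ j - ϑ j‖ ≤ δ * n := by
    intro j
    have hdiff : ξ j - ϑ j = ∑ k, ((1 - S) k j) • ξ k := by
      rw [hθdef]
      simp only [Matrix.sub_apply, sub_smul, Finset.sum_sub_distrib]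
      rw [comb_one]
    have hMherm : ((1 : Matrix (Fin n) (Fin n) ℂ) - S)ᴴ = 1 - S := by
      rw [Matrix.conjTranspose_sub, Matrix.conjTranspose_one, hSherm]
    have hM : (1 : Matrix (Fin n) (Fin n) ℂ) - S = U * (1 - dinv) * star U := by
      rw [Matrix.mul_sub, Matrix.sub_mul, Matrix.mul_one, hUU, hSdef]
    set g : Fin n → ℂ := fun i => (((Real.sqrt (lam i) - 1)^2 : ℝ) : ℂ) with hgdef
    have hMGM : ((1 : Matrix (Fin n) (Fin n) ℂ) - S)ᴴ * G * (1 - S)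
        = U * Matrix.diagonal g * star U := by
      rw [hMherm, hM, hspec, hmul, hmul]
      congr 2
      rw [show (1 : Matrix (Fin n) (Fin n) ℂ) - dinv
          = Matrix.diagonal (fun i => 1 - ((Real.sqrt (lam i) : ℂ))⁻¹) by
        rw [hdinvdef, ← Matrix.diagonal_one, Matrix.diagonal_sub]]
      rw [hDdef, Matrix.diagonal_mul_diagonal, Matrix.diagonal_mul_diagonal]
      refine congrArg Matrix.diagonal (funext fun i => ?_)
      show (1 - ((Real.sqrt (lam i) : ℂ))⁻¹) * (lam i : ℂ) * (1 - ((Real.sqrt (lam i) : ℂ))⁻¹)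
          = g i
      have hl : (lam i : ℂ) = (Real.sqrt (lam i) : ℂ) * (Real.sqrt (lam i) : ℂ) := by
        rw [← Complex.ofReal_mul, Real.mul_self_sqrt (hlam_pos i).le]
      have hne := hsqrt_ne i
      rw [hl, hgdef]
      push_cast
      field_simp
    have hentry : (U * Matrix.diagonal g * star U) j j
        = ((∑ k, (Real.sqrt (lam k) - 1)^2 * Complex.normSq (U j k) : ℝ) : ℂ) := by
      rw [Matrix.mul_apply]
      push_cast
      refine Finset.sum_congr rfl fun k _ => ?_
      rw [Matrix.mul_diagonal, Matrix.star_apply, hgdef]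
      simp only [RCLike.star_def]
      have hmc : U j k * (starRingEnd ℂ) (U j k) = ((Complex.normSq (U j k) : ℝ) : ℂ) :=
        Complex.mul_conj _
      push_cast at hmc ⊢
      linear_combination ((Real.sqrt (lam k) : ℂ) - 1)^2 * hmc
    have hnormsq : ‖ξ j - ϑ j‖^2 = ∑ k, (Real.sqrt (lam k) - 1)^2 * Complex.normSq (U j k) := by
      rw [norm_sq_eq_re_inner (𝕜 := ℂ), hdiff, comb_inner ξ (1 - S) (1 - S) j j, ← hGdef, hMGM, hentry]
      exact RCLike.ofReal_re _
    have hsum1 : ∑ k, Complex.normSq (U j k) = 1 := by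
      have h1 : (U * star U) j j = 1 := by
        rw [hUU]
        simp [Matrix.one_apply]
      have h2 : (U * star U) j j = ((∑ k, Complex.normSq (U j k) : ℝ) : ℂ) := by
        rw [Matrix.mul_apply]
        push_cast
        refine Finset.sum_congr rfl fun k _ => ?_
        rw [Matrix.star_apply]
        simp only [RCLike.star_def]
        exact Complex.mul_conj _
      rw [h1] at h2
      exact_mod_cast h2.symm
    have hb : ‖ξ j - ϑ j‖^2 ≤ (δ*n)^2 := by
      rw [hnormsq]
      calc ∑ k, (Real.sqrt (lam k) - 1)^2 * Complex.normSq (U j k)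
          ≤ ∑ k, (δ*n)^2 * Complex.normSq (U j k) := by
            refine Finset.sum_le_sum fun k _ => ?_
            have hab := abs_le.mp (hsq_near k)
            exact mul_le_mul_of_nonneg_right (sq_le_sq' hab.1 hab.2) (Complex.normSq_nonneg _)
        _ = (δ*n)^2 := by rw [← Finset.mul_sum, hsum1, mul_one]
    nlinarith [norm_nonneg (ξ j - ϑ j), mul_nonneg hδ.le (Nat.cast_nonneg n : (0:ℝ) ≤ (n:ℝ))]
  -- spans
  have hspan : Submodule.span ℂ (Set.range ξ) = Submodule.span ℂ (Set.range ϑ) := by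
    apply le_antisymm
    · rw [Submodule.span_le]
      rintro - ⟨j, rfl⟩
      have hST : S * T = 1 := by
        rw [hSdef, hTdef, hmul, hdinv_d, Matrix.mul_one, hUU]
      have : ξ j = ∑ k, T k j • ϑ k := by
        rw [hθdef]
        rw [comb_comb ξ S T j, hST, comb_one]
      rw [this]
      exact Submodule.sum_mem _ fun k _ =>
        Submodule.smul_mem _ _ (Submodule.subset_span ⟨k, rfl⟩)
    · rw [Submodule.span_le]
      rintro - ⟨j, rfl⟩
      exact Submodule.sum_mem _ fun k _ =>
        Submodule.smul_mem _ _ (Submodule.subset_span ⟨k, rfl⟩)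
  exact ⟨ϑ, hON, hdist, hspan⟩
end

section
/- Let H be a finite dimensional Hilbert space, p an orthogonal projection on H, and ξ₁,…,ξₙ unit vectors in H. Let δ, κ > 0 satisfy κ < 1/10 and 2δ ≤ 1/n. Assume ‖pξₖ‖ ≤ κ for all k and |⟨(I−p)ξⱼ, ξₖ⟩| ≤ δ for all distinct j,k. Then the vectors (I−p)ξ₁,…,(I−p)ξₙ are linearly independent. -/
/-- under smallness conditions, the vectors (I-p)ξ₁,…,(I-p)ξₙ are
linearly independent. -/
theorem stmt2 {H : Type*} [NormedAddCommGroup H] [InnerProductSpace ℂ H] [FiniteDimensional ℂ H]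
    (n : ℕ) (p : H →ₗ[ℂ] H) (hp : p ∘ₗ p = p) (hpa : LinearMap.adjoint p = p)
    (ξ : Fin n → H) (hunit : ∀ k, ‖ξ k‖ = 1)
    (δ κ : ℝ) (hδ : 0 < δ) (hκ : 0 < κ) (hκ' : κ < 1/10) (hδn : 2 * δ ≤ 1 / n)
    (hpξ : ∀ k, ‖p (ξ k)‖ ≤ κ)
    (hip : ∀ j k, j ≠ k → ‖(@inner ℂ H _ (ξ j - p (ξ j)) (ξ k))‖ ≤ δ) :
    LinearIndependent ℂ (fun k => ξ k - p (ξ k)) := by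
  classical
  have hidem : ∀ x, p (p x) = p x := by
    intro x
    have := LinearMap.ext_iff.1 hp x
    simpa using this
  set η : Fin n → H := fun k => ξ k - p (ξ k) with hηdef
  have hpη : ∀ k, p (η k) = 0 := by
    intro k
    simp [hηdef, map_sub, hidem]
  have hinner0 : ∀ j (x : H), (inner ℂ (η j) (p x) : ℂ) = 0 := by
    intro j x
    rw [← hpa, LinearMap.adjoint_inner_right, hpη]
    simp
  have hinner : ∀ j k, (inner ℂ (η j) (η k) : ℂ) = inner ℂ (η j) (ξ k) := by
    intro j k
    have : η k = ξ k - p (ξ k) := rfl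
    rw [this, inner_sub_right, hinner0, sub_zero]
  have hA : ∀ x : H, (inner ℂ x x : ℂ) = ((‖x‖ ^ 2 : ℝ) : ℂ) := by
    intro x
    rw [inner_self_eq_norm_sq_to_K]
    norm_cast
  have hpξξ : ∀ j, (inner ℂ (p (ξ j)) (ξ j) : ℂ) = ((‖p (ξ j)‖ ^ 2 : ℝ) : ℂ) := by
    intro j
    conv_lhs => rw [← hidem (ξ j)]
    rw [← hpa, LinearMap.adjoint_inner_left, hpa, hA]
  have hnormsq : ∀ j, ‖η j‖ ^ 2 = 1 - ‖p (ξ j)‖ ^ 2 := by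
    intro j
    have h1 : ((‖η j‖ ^ 2 : ℝ) : ℂ) = ((1 - ‖p (ξ j)‖ ^ 2 : ℝ) : ℂ) := by
      rw [← hA (η j), hinner j j]
      have he : η j = ξ j - p (ξ j) := rfl
      rw [he, inner_sub_left, hA (ξ j), hpξξ j, hunit j]
      push_cast
      ring
    exact_mod_cast h1
  have hnorm : ∀ j, (99 / 100 : ℝ) ≤ ‖η j‖ ^ 2 := by
    intro j
    rw [hnormsq j]
    have h1 : ‖p (ξ j)‖ ≤ κ := hpξ j
    have h2 : 0 ≤ ‖p (ξ j)‖ := norm_nonneg _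
    nlinarith
  rw [Fintype.linearIndependent_iff]
  intro g hg
  by_contra hcon
  push_neg at hcon
  obtain ⟨i0, hi0⟩ := hcon
  obtain ⟨j, -, hj⟩ := Finset.exists_max_image Finset.univ
    (fun k => ‖g k‖) ⟨i0, Finset.mem_univ i0⟩
  have hgj : 0 < ‖g j‖ := by
    have := hj i0 (Finset.mem_univ i0)
    have h0 : 0 < ‖g i0‖ := by
      simpa [norm_pos_iff] using hi0
    linarith
  have hnpos : (0 : ℝ) < n := by
    have : 0 < n := Nat.pos_of_ne_zero (by rintro rfl; exact absurd j.2 (by simp))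
    exact_mod_cast this
  have hnδ : (n : ℝ) * δ ≤ 1 / 2 := by
    have := (le_div_iff₀ hnpos).mp hδn
    linarith
  have h0 : (∑ k, g k * (inner ℂ (η j) (η k) : ℂ)) = 0 := by
    have := congrArg (fun v => (inner ℂ (η j) v : ℂ)) hg
    simpa [inner_sum, inner_smul_right] using this
  have hsplit : g j * (inner ℂ (η j) (η j) : ℂ)
      = - ∑ k ∈ Finset.univ.erase j, g k * (inner ℂ (η j) (η k) : ℂ) := by
    have h1 := Finset.add_sum_erase Finset.univ
      (fun k => g k * (inner ℂ (η j) (η k) : ℂ)) (Finset.mem_univ j)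
    rw [h0] at h1
    linear_combination h1
  have habsA : ‖(inner ℂ (η j) (η j) : ℂ)‖ = ‖η j‖ ^ 2 := by
    rw [hA (η j), Complex.norm_real, Real.norm_eq_abs, abs_of_nonneg (by positivity)]
  have hbound : ‖g j‖ * (‖η j‖ ^ 2)
      ≤ ((Finset.univ.erase j).card : ℝ) * (‖g j‖ * δ) := by
    calc ‖g j‖ * (‖η j‖ ^ 2)
        = ‖g j * (inner ℂ (η j) (η j) : ℂ)‖ := by
          rw [norm_mul, habsA]
      _ = ‖∑ k ∈ Finset.univ.erase j, g k * (inner ℂ (η j) (η k) : ℂ)‖ := by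
          rw [hsplit, norm_neg]
      _ ≤ ∑ k ∈ Finset.univ.erase j, ‖g k * (inner ℂ (η j) (η k) : ℂ)‖ :=
          norm_sum_le _ _
      _ ≤ ∑ k ∈ Finset.univ.erase j, ‖g j‖ * δ := by
          apply Finset.sum_le_sum
          intro k hk
          have hkj : j ≠ k := (Finset.ne_of_mem_erase hk).symm
          rw [norm_mul]
          apply mul_le_mul
          · exact hj k (Finset.mem_univ k)
          · rw [hinner j k]
            exact hip j k hkj
          · exact norm_nonneg _
          · exact norm_nonneg _
      _ = ((Finset.univ.erase j).card : ℝ) * (‖g j‖ * δ) := by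
          rw [Finset.sum_const, nsmul_eq_mul]
  have hcard : ((Finset.univ.erase j).card : ℝ) ≤ (n : ℝ) := by
    have : (Finset.univ.erase j).card ≤ n :=
      Finset.card_erase_le.trans (by simp)
    exact_mod_cast this
  have hE := hnorm j
  nlinarith [mul_le_mul_of_nonneg_right hcard (mul_nonneg (norm_nonneg (g j)) hδ.le),
    mul_le_mul_of_nonneg_left hE hgj.le,
    mul_le_mul_of_nonneg_left hnδ hgj.le]
end

section
/- Let H be a finite dimensional Hilbert space, p an orthogonal projection, and ξ₁,…,ξₙ unit vectors with κ < 1/10, 2δ ≤ 1/n, ‖pξₖ‖ ≤ κ for all k, and |⟨(I−p)ξⱼ, ξₖ⟩| ≤ δ for distinct j,k. Setting φₖ = (I−p)ξₖ / √(1 − ‖pξₖ‖²), there exists an orthonormal basis ϑ₁,…,ϑₙ of span((I−p)ξ₁,…,(I−p)ξₙ) with max₁≤k≤n ‖φₖ − ϑₖ‖ ≤ 2δn. -/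
open scoped InnerProductSpace Pointwise
open ContinuousLinearMap in
lemma loewdin {E F : Type*} [NormedAddCommGroup E] [InnerProductSpace ℂ E]
    [FiniteDimensional ℂ E] [Nontrivial E]
    [NormedAddCommGroup F] [InnerProductSpace ℂ F] [FiniteDimensional ℂ F]
    (T : E →L[ℂ] F) (ε : ℝ) (hε0 : 0 ≤ ε) (hε1 : ε < 1)
    (hG : ‖ContinuousLinearMap.adjoint T ∘L T - 1‖ ≤ ε) :
    ∃ S : E →L[ℂ] E, Function.Surjective S ∧
      (∀ x y : E, ⟪T (S x), T (S y)⟫_ℂ = ⟪x, y⟫_ℂ) ∧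
      (∀ x : E, ‖T x - T (S x)‖ ≤ ε * ‖x‖) := by
  set G : E →L[ℂ] E := ContinuousLinearMap.adjoint T ∘L T with hGdef
  have hGsa : IsSelfAdjoint G := by
    rw [IsSelfAdjoint, star_eq_adjoint, hGdef, adjoint_comp, adjoint_adjoint]
  have hspec : spectrum ℝ G ⊆ Set.Icc (1 - ε) (1 + ε) := by
    intro μ hμ
    have h1 : μ - 1 ∈ spectrum ℝ G - {(1:ℝ)} := Set.sub_mem_sub hμ rfl
    rw [spectrum.sub_singleton_eq] at h1
    have h2 : ‖μ - 1‖ ≤ ‖G - algebraMap ℝ (E →L[ℂ] E) 1‖ := spectrum.norm_le_norm_of_mem h1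
    rw [map_one] at h2
    have := le_trans h2 hG
    rw [Real.norm_eq_abs, abs_le] at this
    constructor <;> linarith [this.1, this.2]
  have hpos : ∀ t ∈ spectrum ℝ G, (0:ℝ) < t := by
    intro t ht
    have := (hspec ht).1
    linarith
  have hfc : ContinuousOn Real.sqrt (spectrum ℝ G) := Real.continuous_sqrt.continuousOn
  have hgc : ContinuousOn (fun t : ℝ => (Real.sqrt t)⁻¹) (spectrum ℝ G) := by
    apply ContinuousOn.inv₀ hfc
    intro t ht
    exact (Real.sqrt_pos.mpr (hpos t ht)).ne'
  set R : E →L[ℂ] E := cfc Real.sqrt G with hRdef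
  set S : E →L[ℂ] E := cfc (fun t : ℝ => (Real.sqrt t)⁻¹) G with hSdef
  have hRS : R * S = 1 := by
    rw [hRdef, hSdef, ← cfc_mul _ _ G hfc hgc]
    have : cfc (fun t : ℝ => Real.sqrt t * (Real.sqrt t)⁻¹) G = cfc (fun _ : ℝ => (1:ℝ)) G := by
      apply cfc_congr
      intro t ht
      field_simp [(Real.sqrt_pos.mpr (hpos t ht)).ne']
    rw [this, cfc_const 1 G hGsa, map_one]
  have hSR : S * R = 1 := by
    rw [hRdef, hSdef, ← cfc_mul _ _ G hgc hfc]
    have : cfc (fun t : ℝ => (Real.sqrt t)⁻¹ * Real.sqrt t) G = cfc (fun _ : ℝ => (1:ℝ)) G := by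
      apply cfc_congr
      intro t ht
      field_simp [(Real.sqrt_pos.mpr (hpos t ht)).ne']
    rw [this, cfc_const 1 G hGsa, map_one]
  have hRR : R * R = G := by
    rw [hRdef, ← cfc_mul _ _ G hfc hfc]
    have : cfc (fun t : ℝ => Real.sqrt t * Real.sqrt t) G = cfc (id : ℝ → ℝ) G := by
      apply cfc_congr
      intro t ht
      exact Real.mul_self_sqrt (hpos t ht).le
    rw [this, cfc_id ℝ G hGsa]
  have hRsa : IsSelfAdjoint R := cfc_predicate Real.sqrt G
  have hRadj : ContinuousLinearMap.adjoint R = R := by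
    rw [← star_eq_adjoint]; exact hRsa
  have hGx : ∀ x y : E, ⟪G x, y⟫_ℂ = ⟪T x, T y⟫_ℂ := by
    intro x y
    rw [hGdef]
    exact adjoint_inner_left T y (T x)
  have hTT : ∀ x y : E, ⟪T x, T y⟫_ℂ = ⟪R x, R y⟫_ℂ := by
    intro x y
    rw [← hGx, ← hRR, mul_apply_eq_comp]
    have h := adjoint_inner_left R y (R x)
    rw [hRadj] at h
    exact h
  have hTnorm : ∀ x : E, ‖T x‖ = ‖R x‖ := by
    intro x
    have h1 : (‖T x‖ : ℝ)^2 = ‖R x‖^2 := by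
      have := hTT x x
      rw [inner_self_eq_norm_sq_to_K, inner_self_eq_norm_sq_to_K] at this
      exact_mod_cast this
    nlinarith [norm_nonneg (T x), norm_nonneg (R x)]
  refine ⟨S, ?_, ?_, ?_⟩
  · intro x
    exact ⟨R x, by rw [← mul_apply_eq_comp, hSR, one_apply_eq_self]⟩
  · intro x y
    rw [hTT, ← mul_apply_eq_comp R S, ← mul_apply_eq_comp R S, hRS, one_apply_eq_self, one_apply_eq_self]
  · intro x
    have h1 : T x - T (S x) = T (x - S x) := by rw [map_sub]
    rw [h1, hTnorm, map_sub, ← mul_apply_eq_comp R S, hRS, one_apply_eq_self]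
    have h2 : R x - x = (R - 1) x := by simp
    rw [h2]
    have h3 : ‖R - 1‖ ≤ ε := by
      have heq : R - 1 = cfc (fun t : ℝ => Real.sqrt t - 1) G := by
        rw [cfc_sub _ _ G hfc (by fun_prop), cfc_const 1 G hGsa, map_one, hRdef]
      rw [heq]
      apply norm_cfc_le hε0
      intro t ht
      obtain ⟨h4, h5⟩ := hspec ht
      have hs := Real.sqrt_nonneg t
      have hsq : Real.sqrt t ^ 2 = t := Real.sq_sqrt (hpos t ht).le
      rw [Real.norm_eq_abs, abs_le]
      constructor <;> nlinarith
    calc ‖(R - 1) x‖ ≤ ‖R - 1‖ * ‖x‖ := (R - 1).le_opNorm x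
      _ ≤ ε * ‖x‖ := by gcongr
open scoped InnerProductSpace

lemma euclid_decomp {n : ℕ} (x : EuclideanSpace ℂ (Fin n)) :
    x = ∑ j, x j • EuclideanSpace.single j (1:ℂ) := by
  ext i
  have h : (∑ j, x j • EuclideanSpace.single j (1:ℂ)) i
      = ∑ j, (x j • EuclideanSpace.single j (1:ℂ)) i := by rw [WithLp.ofLp_sum]; exact Finset.sum_apply i Finset.univ _
  rw [h]
  simp [EuclideanSpace.single_apply]

open ContinuousLinearMap in
lemma gram_bound {F : Type*} [NormedAddCommGroup F] [InnerProductSpace ℂ F]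
    [FiniteDimensional ℂ F] (n : ℕ)
    (T : EuclideanSpace ℂ (Fin n) →L[ℂ] F) (d : ℝ) (hd : 0 ≤ d)
    (hdiag : ∀ i, ⟪T (EuclideanSpace.single i 1), T (EuclideanSpace.single i 1)⟫_ℂ = 1)
    (hoff : ∀ i j, i ≠ j →
      ‖⟪T (EuclideanSpace.single i 1), T (EuclideanSpace.single j 1)⟫_ℂ‖ ≤ d) :
    ‖ContinuousLinearMap.adjoint T ∘L T - 1‖ ≤ n * d := by
  set A : EuclideanSpace ℂ (Fin n) →L[ℂ] EuclideanSpace ℂ (Fin n) :=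
    ContinuousLinearMap.adjoint T ∘L T - 1 with hA
  -- entries
  have hentry : ∀ i j : Fin n, (A (EuclideanSpace.single j 1)) i =
      ⟪T (EuclideanSpace.single i 1), T (EuclideanSpace.single j 1)⟫_ℂ
        - (if i = j then 1 else 0) := by
    intro i j
    have h1 : (A (EuclideanSpace.single j 1)) i
        = ⟪EuclideanSpace.single i (1:ℂ), A (EuclideanSpace.single j 1)⟫_ℂ := by
      rw [EuclideanSpace.inner_single_left]; simp
    rw [h1, hA, sub_apply, inner_sub_right, one_apply_eq_self, comp_apply, adjoint_inner_right]
    congr 1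
    simp [EuclideanSpace.inner_single_left, EuclideanSpace.single_apply, eq_comm]
  -- column bound
  have hcol : ∀ j : Fin n, ‖A (EuclideanSpace.single j 1)‖ ≤ Real.sqrt n * d := by
    intro j
    rw [EuclideanSpace.norm_eq]
    have hb : ∀ i : Fin n, ‖(A (EuclideanSpace.single j 1)) i‖ ^ 2 ≤ d ^ 2 := by
      intro i
      rcases eq_or_ne i j with h | h
      · rw [hentry, if_pos h, h, hdiag]
        simpa using sq_nonneg d
      · rw [hentry, if_neg h, sub_zero]
        have := hoff i j h
        nlinarith [norm_nonneg (⟪T (EuclideanSpace.single i 1), T (EuclideanSpace.single j 1)⟫_ℂ)]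
    calc Real.sqrt (∑ i, ‖(A (EuclideanSpace.single j 1)) i‖ ^ 2)
        ≤ Real.sqrt (∑ _i : Fin n, d ^ 2) := by
          apply Real.sqrt_le_sqrt
          exact Finset.sum_le_sum fun i _ => hb i
      _ = Real.sqrt n * d := by
          rw [Finset.sum_const, Finset.card_univ, Fintype.card_fin, nsmul_eq_mul,
            Real.sqrt_mul (by positivity), Real.sqrt_sq hd]
  apply opNorm_le_bound _ (by positivity)
  intro x
  have hdec : A x = ∑ j, x j • A (EuclideanSpace.single j 1) := by
    conv_lhs => rw [euclid_decomp x]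
    rw [map_sum]
    simp
  rw [hdec]
  calc ‖∑ j, x j • A (EuclideanSpace.single j 1)‖
      ≤ ∑ j, ‖x j • A (EuclideanSpace.single j 1)‖ := norm_sum_le _ _
    _ = ∑ j, ‖x j‖ * ‖A (EuclideanSpace.single j 1)‖ := by simp [norm_smul]
    _ ≤ ∑ j, ‖x j‖ * (Real.sqrt n * d) := by
        apply Finset.sum_le_sum
        intro j _
        exact mul_le_mul_of_nonneg_left (hcol j) (norm_nonneg _)
    _ = (∑ j, ‖x j‖) * (Real.sqrt n * d) := by rw [← Finset.sum_mul]
    _ ≤ (Real.sqrt n * ‖x‖) * (Real.sqrt n * d) := by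
        apply mul_le_mul_of_nonneg_right _ (by positivity)
        -- Cauchy–Schwarz : ∑ ‖x j‖ ≤ √n ‖x‖
        have hcs := Finset.sum_mul_sq_le_sq_mul_sq Finset.univ
          (fun _ : Fin n => (1:ℝ)) (fun j => ‖x j‖)
        simp only [one_pow, one_mul, Finset.sum_const, Finset.card_univ,
          Fintype.card_fin, nsmul_eq_mul, mul_one] at hcs
        have hx : ‖x‖ ^ 2 = ∑ j, ‖x j‖ ^ 2 := by
          rw [EuclideanSpace.norm_eq, Real.sq_sqrt (by positivity)]
        have h1 : (∑ j, ‖x j‖) ^ 2 ≤ (Real.sqrt n * ‖x‖) ^ 2 := by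
          rw [mul_pow, Real.sq_sqrt (Nat.cast_nonneg n), hx]
          exact hcs
        have h2 : (0:ℝ) ≤ ∑ j, ‖x j‖ := Finset.sum_nonneg fun j _ => norm_nonneg _
        have h3 := Real.sqrt_le_sqrt h1
        rwa [Real.sqrt_sq h2, Real.sqrt_sq (mul_nonneg (Real.sqrt_nonneg _) (norm_nonneg _))] at h3
    _ = Real.sqrt n * Real.sqrt n * d * ‖x‖ := by ring
    _ = n * d * ‖x‖ := by
        rw [Real.mul_self_sqrt (Nat.cast_nonneg n)]

open scoped InnerProductSpace

set_option maxHeartbeats 1000000 in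
/-- the normalized vectors φₖ = (I-p)ξₖ/√(1-‖pξₖ‖²) are close to an
orthonormal basis of the span of the (I-p)ξₖ. -/
theorem stmt3 {H : Type*} [NormedAddCommGroup H] [InnerProductSpace ℂ H] [FiniteDimensional ℂ H]
    (n : ℕ) (p : H →ₗ[ℂ] H) (hp : p ∘ₗ p = p) (hpa : LinearMap.adjoint p = p)
    (ξ : Fin n → H) (hunit : ∀ k, ‖ξ k‖ = 1)
    (δ κ : ℝ) (hδ : 0 < δ) (hκ : 0 < κ) (hκ' : κ < 1/10) (hδn : 2 * δ ≤ 1 / n)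
    (hpξ : ∀ k, ‖p (ξ k)‖ ≤ κ)
    (hip : ∀ j k, j ≠ k → ‖(@inner ℂ H _ (ξ j - p (ξ j)) (ξ k))‖ ≤ δ)
    (φ : Fin n → H)
    (hφ : ∀ k, φ k = ((Real.sqrt (1 - ‖p (ξ k)‖ ^ 2) : ℂ))⁻¹ • (ξ k - p (ξ k))) :
    ∃ ϑ : Fin n → H, Orthonormal ℂ ϑ ∧
      Submodule.span ℂ (Set.range ϑ) = Submodule.span ℂ (Set.range fun k => ξ k - p (ξ k)) ∧
      ∀ k, ‖φ k - ϑ k‖ ≤ 2 * δ * n := by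
  -- n is positive
  have hn : 0 < n := by
    rcases Nat.eq_zero_or_pos n with h | h
    · subst h; simp at hδn; linarith
    · exact h
  have hnR : (0:ℝ) < n := by exact_mod_cast hn
  -- basic projection facts
  have hpp : ∀ x : H, p (p x) = p x := fun x => LinearMap.congr_fun hp x
  have hproj : ∀ x y : H, ⟪x - p x, p y⟫_ℂ = 0 := by
    intro x y
    have h := LinearMap.adjoint_inner_left p y (x - p x)
    rw [hpa] at h
    rw [← h, map_sub, hpp, sub_self, inner_zero_left]
  have hinner : ∀ x y : H, ⟪x - p x, y - p y⟫_ℂ = ⟪x - p x, y⟫_ℂ := by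
    intro x y
    rw [inner_sub_right, hproj, sub_zero]
  set ψ : Fin n → H := fun k => ξ k - p (ξ k) with hψdef
  have hψψ : ∀ k, ⟪ψ k, ψ k⟫_ℂ = ((1 - ‖p (ξ k)‖ ^ 2 : ℝ) : ℂ) := by
    intro k
    have h1 : ⟪p (ξ k), ξ k⟫_ℂ = ((‖p (ξ k)‖ ^ 2 : ℝ) : ℂ) := by
      have h := LinearMap.adjoint_inner_left p (ξ k) (p (ξ k))
      rw [hpa] at h
      calc ⟪p (ξ k), ξ k⟫_ℂ = ⟪p (p (ξ k)), ξ k⟫_ℂ := by rw [hpp]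
        _ = ⟪p (ξ k), p (ξ k)⟫_ℂ := h
        _ = ((‖p (ξ k)‖ ^ 2 : ℝ) : ℂ) := by
            rw [inner_self_eq_norm_sq_to_K]; norm_cast
    calc ⟪ψ k, ψ k⟫_ℂ = ⟪ψ k, ξ k⟫_ℂ := hinner (ξ k) (ξ k)
      _ = ⟪ξ k, ξ k⟫_ℂ - ⟪p (ξ k), ξ k⟫_ℂ := inner_sub_left _ _ _
      _ = ((1 - ‖p (ξ k)‖ ^ 2 : ℝ) : ℂ) := by
          rw [inner_self_eq_norm_sq_to_K, hunit k, h1]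
          push_cast
          ring
  have hψnorm2 : ∀ k, ‖ψ k‖ ^ 2 = 1 - ‖p (ξ k)‖ ^ 2 := by
    intro k
    rw [norm_sq_eq_re_inner (𝕜 := ℂ), hψψ k]
    exact Complex.ofReal_re _
  have hpξsq : ∀ k, ‖p (ξ k)‖ ^ 2 ≤ 1/100 := by
    intro k
    have h1 := hpξ k
    have h2 := norm_nonneg (p (ξ k))
    nlinarith
  have hψlb : ∀ k, 99/100 ≤ ‖ψ k‖ ^ 2 := by
    intro k; rw [hψnorm2]; linarith [hpξsq k]
  have hψpos : ∀ k, 0 < ‖ψ k‖ := by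
    intro k
    nlinarith [hψlb k, norm_nonneg (ψ k)]
  have hsqrt : ∀ k, Real.sqrt (1 - ‖p (ξ k)‖ ^ 2) = ‖ψ k‖ := by
    intro k; rw [← hψnorm2, Real.sqrt_sq (norm_nonneg _)]
  have hφ' : ∀ k, φ k = ((‖ψ k‖ : ℝ) : ℂ)⁻¹ • ψ k := by
    intro k; rw [hφ, hsqrt]
  have hφnorm : ∀ k, ‖φ k‖ = 1 := by
    intro k
    rw [hφ', norm_smul, norm_inv, Complex.norm_real, Real.norm_eq_abs,
      abs_of_pos (hψpos k), inv_mul_cancel₀ (hψpos k).ne']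
  have hφdiag : ∀ k, ⟪φ k, φ k⟫_ℂ = 1 := by
    intro k
    rw [inner_self_eq_norm_sq_to_K, hφnorm]
    norm_num
  have hφoff : ∀ i j, i ≠ j → ‖⟪φ i, φ j⟫_ℂ‖ ≤ 100/99 * δ := by
    intro i j hij
    have h1 : ⟪φ i, φ j⟫_ℂ
        = (starRingEnd ℂ) ((‖ψ i‖ : ℂ))⁻¹ * (((‖ψ j‖ : ℂ))⁻¹ * ⟪ψ i, ψ j⟫_ℂ) := by
      rw [hφ', hφ', inner_smul_left, inner_smul_right, map_inv₀]
    have h2 : ‖⟪ψ i, ψ j⟫_ℂ‖ ≤ δ := by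
      show ‖⟪ξ i - p (ξ i), ξ j - p (ξ j)⟫_ℂ‖ ≤ δ
      rw [hinner]
      exact hip i j hij
    have hprod : 99/100 ≤ ‖ψ i‖ * ‖ψ j‖ := by
      nlinarith [hψlb i, hψlb j, hψpos i, hψpos j]
    have habs : ‖⟪φ i, φ j⟫_ℂ‖
        = (‖ψ i‖ * ‖ψ j‖)⁻¹ * ‖⟪ψ i, ψ j⟫_ℂ‖ := by
      rw [h1]
      simp only [norm_mul, norm_inv, Complex.norm_conj, Complex.norm_real, Real.norm_eq_abs,
        abs_of_pos (hψpos i), abs_of_pos (hψpos j), mul_inv]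
      ring
    rw [habs]
    have h4 : (‖ψ i‖ * ‖ψ j‖)⁻¹ ≤ 100/99 := by
      rw [inv_le_comm₀ (by nlinarith [hψpos i, hψpos j]) (by norm_num)]
      calc (100/99 : ℝ)⁻¹ = 99/100 := by norm_num
        _ ≤ ‖ψ i‖ * ‖ψ j‖ := hprod
    exact mul_le_mul h4 h2 (norm_nonneg _) (by norm_num)
  -- the synthesis map T
  have hTl : ∃ Tl : EuclideanSpace ℂ (Fin n) →ₗ[ℂ] H, ∀ x, Tl x = ∑ i, x i • φ i := by
    refine ⟨⟨⟨fun x => ∑ i, x i • φ i, ?_⟩, ?_⟩, fun _ => rfl⟩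
    · intro x y
      simp only [PiLp.add_apply, add_smul]
      rw [Finset.sum_add_distrib]
    · intro c x
      simp only [PiLp.smul_apply, smul_eq_mul, RingHom.id_apply, Finset.smul_sum, smul_smul]
  obtain ⟨Tl, hTlapp⟩ := hTl
  set T := (LinearMap.toContinuousLinearMap Tl : EuclideanSpace ℂ (Fin n) →L[ℂ] H) with hT
  have hTapp : ∀ x, T x = ∑ i, x i • φ i := by
    intro x
    rw [hT]
    rw [LinearMap.coe_toContinuousLinearMap']
    exact hTlapp x
  have hTs : ∀ i, T (EuclideanSpace.single i 1) = φ i := by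
    intro i
    rw [hTapp]
    have : ∀ j, (EuclideanSpace.single i (1:ℂ)) j • φ j = if j = i then φ j else 0 := by
      intro j
      rw [EuclideanSpace.single_apply]
      split <;> simp
    simp only [this]
    rw [Finset.sum_ite_eq' Finset.univ i φ]
    simp
  -- Gram bound
  have hGram : ‖ContinuousLinearMap.adjoint T ∘L T - 1‖ ≤ n * (100/99 * δ) := by
    apply gram_bound n T (100/99 * δ) (by positivity)
    · intro i; rw [hTs]; exact hφdiag i
    · intro i j hij; rw [hTs, hTs]; exact hφoff i j hij
  have h2δn : 2 * δ * n ≤ 1 := by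
    rw [le_div_iff₀ hnR] at hδn
    linarith
  have hε0 : (0:ℝ) ≤ n * (100/99 * δ) := by positivity
  have hε1 : (n:ℝ) * (100/99 * δ) < 1 := by nlinarith
  haveI : Nontrivial (EuclideanSpace ℂ (Fin n)) := by
    refine nontrivial_of_ne (EuclideanSpace.single ⟨0, hn⟩ (1:ℂ)) 0 ?_
    intro h
    have := congrArg norm h
    rw [EuclideanSpace.norm_single] at this
    simp at this
  obtain ⟨S, hSsurj, hSinner, hSbound⟩ :=
    loewdin T (n * (100/99 * δ)) hε0 hε1 hGram
  refine ⟨fun i => T (S (EuclideanSpace.single i 1)), ?_, ?_, ?_⟩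
  · rw [orthonormal_iff_ite]
    intro i j
    rw [hSinner, EuclideanSpace.inner_single_left, EuclideanSpace.single_apply]
    simp [eq_comm]
  · have hTmem : ∀ x, T x ∈ Submodule.span ℂ (Set.range φ) := by
      intro x
      rw [hTapp]
      exact Submodule.sum_mem _ fun i _ =>
        Submodule.smul_mem _ _ (Submodule.subset_span (Set.mem_range_self i))
    have hspanφψ : Submodule.span ℂ (Set.range φ)
        ≤ Submodule.span ℂ (Set.range ψ) := by
      rw [Submodule.span_le]
      rintro _ ⟨k, rfl⟩
      rw [hφ' k]
      exact Submodule.smul_mem _ _ (Submodule.subset_span ⟨k, rfl⟩)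
    apply le_antisymm
    · rw [Submodule.span_le]
      rintro _ ⟨i, rfl⟩
      exact hspanφψ (hTmem _)
    · rw [Submodule.span_le]
      rintro _ ⟨k, rfl⟩
      have hψφ : ψ k = ((‖ψ k‖ : ℝ) : ℂ) • φ k := by
        rw [hφ' k, smul_smul, mul_inv_cancel₀, one_smul]
        exact_mod_cast (hψpos k).ne'
      obtain ⟨y, hy⟩ := hSsurj (EuclideanSpace.single k 1)
      have hTSmem : T (S y)
          ∈ Submodule.span ℂ (Set.range fun i => T (S (EuclideanSpace.single i 1))) := by
        rw [euclid_decomp y, map_sum, map_sum]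
        simp only [map_smul]
        exact Submodule.sum_mem _ fun j _ =>
          Submodule.smul_mem _ _ (Submodule.subset_span ⟨j, rfl⟩)
      rw [hψφ, ← hTs k, ← hy]
      exact Submodule.smul_mem _ _ hTSmem
  · intro k
    have h1 : φ k = T (EuclideanSpace.single k 1) := (hTs k).symm
    rw [h1]
    calc ‖T (EuclideanSpace.single k 1) - T (S (EuclideanSpace.single k 1))‖
        ≤ n * (100/99 * δ) * ‖EuclideanSpace.single k (1:ℂ)‖ := hSbound _
      _ = n * (100/99 * δ) := by rw [EuclideanSpace.norm_single, norm_one, mul_one]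
      _ ≤ 2 * δ * n := by nlinarith
end

section
/- Let H be a finite dimensional Hilbert space, 0 < δ < 1/2, p an orthogonal projection on H, and u a unitary operator on H such that ‖(I−p)up‖²_HS ≤ δ·dim(H). Then there exists an operator v on H with vv* = v*v = p (a partial isometry which is unitary on the range of p, commuting with p) such that ‖(u−v)p‖²_HS ≤ 4δ·dim(H). -/
local notation "⟪" x ", " y "⟫" => @inner ℂ _ _ x y

/-- Trace of an operator as a sum of diagonal inner products in an orthonormal basis. -/
lemma trace_eq_sum_inner' {E : Type*} [NormedAddCommGroup E] [InnerProductSpace ℂ E]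
    [FiniteDimensional ℂ E] {ι : Type*} [Fintype ι] [DecidableEq ι]
    (e : OrthonormalBasis ι ℂ E) (T : E →ₗ[ℂ] E) :
    LinearMap.trace ℂ E T = ∑ i, ⟪e i, T (e i)⟫ := by
  rw [LinearMap.trace_eq_matrix_trace ℂ e.toBasis, Matrix.trace]
  congr 1
  ext i
  simp [Matrix.diag, LinearMap.toMatrix_apply, OrthonormalBasis.coe_toBasis_repr_apply,
    OrthonormalBasis.repr_apply_apply, OrthonormalBasis.coe_toBasis]

/-- The squared Hilbert–Schmidt norm of an operator on a finite dimensional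
complex Hilbert space: ‖s‖²_HS = tr(s*s). -/
noncomputable def hsNormSq {H : Type*} [NormedAddCommGroup H] [InnerProductSpace ℂ H]
    [FiniteDimensional ℂ H] (s : H →ₗ[ℂ] H) : ℝ :=
  (LinearMap.trace ℂ H (LinearMap.adjoint s ∘ₗ s)).re

set_option maxHeartbeats 2000000 in
/-- almost invariant projections can be repaired: if
‖(I-p)up‖²_HS ≤ δ·dim H then there is v with vv* = v*v = p, commuting with p,
and ‖(u-v)p‖²_HS ≤ 4δ·dim H. -/
theorem stmt4 {H : Type*} [NormedAddCommGroup H] [InnerProductSpace ℂ H] [FiniteDimensional ℂ H]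
    (δ : ℝ) (hδ0 : 0 < δ) (hδ1 : δ < 1/2)
    (p : H →ₗ[ℂ] H) (hp : p ∘ₗ p = p) (hpa : LinearMap.adjoint p = p)
    (u : H →ₗ[ℂ] H) (hu1 : LinearMap.adjoint u ∘ₗ u = LinearMap.id)
    (hu2 : u ∘ₗ LinearMap.adjoint u = LinearMap.id)
    (hinv : hsNormSq ((LinearMap.id - p) ∘ₗ u ∘ₗ p) ≤ δ * Module.finrank ℂ H) :
    ∃ v : H →ₗ[ℂ] H,
      v ∘ₗ LinearMap.adjoint v = p ∧ LinearMap.adjoint v ∘ₗ v = p ∧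
      v ∘ₗ p = p ∘ₗ v ∧
      hsNormSq ((u - v) ∘ₗ p) ≤ 4 * δ * Module.finrank ℂ H := by
  classical
  set K : Submodule ℂ H := LinearMap.range p with hK
  -- p fixes K
  have hpfix : ∀ k : K, p (k : H) = (k : H) := by
    rintro ⟨_, z, rfl⟩
    exact DFunLike.congr_fun hp z
  have hppt : ∀ x, p (p x) = p x := fun x => DFunLike.congr_fun hp x
  let ι₀ : K →ₗ[ℂ] H := K.subtype
  let π : H →ₗ[ℂ] K := (K.orthogonalProjectionOnto : H →L[ℂ] K)
  -- p = ι₀ ∘ π pointwise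
  have hιπ : ∀ x, (ι₀ (π x) : H) = p x := by
    intro x
    refine Submodule.eq_starProjection_of_mem_of_inner_eq_zero ⟨x, rfl⟩ ?_
    rintro w ⟨z, rfl⟩
    have : ⟪x - p x, p z⟫ = ⟪p (x - p x), z⟫ := by
      rw [← LinearMap.adjoint_inner_left, hpa]
    rw [this]
    simp [map_sub, hppt]
  have hπι : ∀ k : K, π (ι₀ k) = k := fun k => Submodule.orthogonalProjectionOnto_mem_subspace_eq_self k
  -- inner product transfer
  have hKinner : ∀ (k : K) (y : H), ⟪(k : H), y⟫ = ⟪k, π y⟫ := by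
    intro k y
    have h1 : (⟪k, π y⟫ : ℂ) = ⟪(k : H), (ι₀ (π y) : H)⟫ := rfl
    rw [h1, hιπ]
    have : ⟪(k : H), p y⟫ = ⟪p (k : H), y⟫ := by
      have h2 := LinearMap.adjoint_inner_right p (k : H) y
      rwa [hpa] at h2
    rw [this, hpfix]
  have hKinner' : ∀ (y : H) (k : K), ⟪y, (k : H)⟫ = ⟪π y, k⟫ := by
    intro y k
    have := congrArg (starRingEnd ℂ) (hKinner k y)
    rwa [inner_conj_symm, inner_conj_symm] at this
  -- adjoint of ι₀
  have hadjι : LinearMap.adjoint ι₀ = π := by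
    symm
    rw [LinearMap.eq_adjoint_iff]
    intro x y
    exact (hKinner' x y).symm
  -- the compressed operator on K
  set b : K →ₗ[ℂ] K := π ∘ₗ u ∘ₗ ι₀ with hb
  have hTsym : (LinearMap.adjoint b ∘ₗ b).IsSymmetric := by
    intro x y
    simp only [LinearMap.comp_apply]
    rw [LinearMap.adjoint_inner_left, LinearMap.adjoint_inner_right]
  set n : ℕ := Module.finrank ℂ K with hn
  have hnK : Module.finrank ℂ K = n := rfl
  set e : OrthonormalBasis (Fin n) ℂ K := hTsym.eigenvectorBasis hnK with he
  set μ : Fin n → ℝ := hTsym.eigenvalues hnK with hμdef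
  have hTe : ∀ i, (LinearMap.adjoint b ∘ₗ b) (e i) = (μ i : ℂ) • e i :=
    fun i => hTsym.apply_eigenvectorBasis hnK i
  have henorm : ∀ i, ‖e i‖ = 1 := fun i => e.orthonormal.1 i
  have hbe : ∀ i j, ⟪b (e i), b (e j)⟫ = if i = j then (μ j : ℂ) else 0 := by
    intro i j
    have h1 := LinearMap.adjoint_inner_right b (e i) (b (e j))
    have h2 : LinearMap.adjoint b (b (e j)) = (μ j : ℂ) • e j := hTe j
    rw [← h1, h2, inner_smul_right, orthonormal_iff_ite.mp e.orthonormal i j]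
    by_cases h : i = j <;> simp [h]
  have hμnorm : ∀ i, μ i = ‖b (e i)‖ ^ 2 := by
    intro i
    have h1 := hbe i i
    rw [if_pos rfl, inner_self_eq_norm_sq_to_K] at h1
    have h2 : ((μ i : ℝ) : ℂ) = ((‖b (e i)‖ ^ 2 : ℝ) : ℂ) := by
      rw [← h1]; norm_cast
    exact_mod_cast h2
  have hμ0 : ∀ i, 0 ≤ μ i := fun i => (hμnorm i) ▸ sq_nonneg _
  -- u preserves norms
  have hunorm : ∀ x : H, ‖u x‖ = ‖x‖ := by
    intro x
    have h1 : ⟪u x, u x⟫ = ⟪x, x⟫ := by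
      rw [← LinearMap.adjoint_inner_left]
      exact congrArg (fun z => ⟪z, x⟫) (DFunLike.congr_fun hu1 x)
    have := congrArg Complex.re h1
    rw [inner_self_eq_norm_sq_to_K, inner_self_eq_norm_sq_to_K] at h1
    have h2 : (‖u x‖ : ℝ) ^ 2 = ‖x‖ ^ 2 := by exact_mod_cast h1
    nlinarith [norm_nonneg (u x), norm_nonneg x]
  -- π is norm-nonincreasing via pythagoras
  have hpyth : ∀ y : H, ‖y‖ ^ 2 = ‖p y‖ ^ 2 + ‖y - p y‖ ^ 2 := by
    intro y
    have horth : ⟪p y, y - p y⟫ = 0 := by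
      have h2 := LinearMap.adjoint_inner_left p (y - p y) y
      rw [hpa] at h2
      rw [h2]
      have h3 : p (y - p y) = 0 := by simp [map_sub, hppt]
      rw [h3, inner_zero_right]
    have hdecomp : y = p y + (y - p y) := by abel
    calc ‖y‖ ^ 2 = ‖p y + (y - p y)‖ ^ 2 := by rw [← hdecomp]
    _ = ‖p y‖ ^ 2 + 2 * (RCLike.re ⟪p y, y - p y⟫) + ‖y - p y‖ ^ 2 := by
        rw [@norm_add_sq ℂ]
    _ = ‖p y‖ ^ 2 + ‖y - p y‖ ^ 2 := by rw [horth]; simp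
  have hbnorm : ∀ k : K, ‖b k‖ = ‖p (u (ι₀ k))‖ := by
    intro k
    have h1 : (ι₀ (b k) : H) = p (u (ι₀ k)) := hιπ (u (ι₀ k))
    rw [← h1]
    exact (Submodule.coe_norm (b k)).symm
  have hμ1 : ∀ i, μ i ≤ 1 := by
    intro i
    rw [hμnorm i]
    have h1 : ‖b (e i)‖ ^ 2 ≤ ‖u (ι₀ (e i))‖ ^ 2 := by
      rw [hbnorm]
      linarith [hpyth (u (ι₀ (e i))), sq_nonneg ‖u (ι₀ (e i)) - p (u (ι₀ (e i)))‖]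
    have h2 : ‖u (ι₀ (e i))‖ = 1 := by
      rw [hunorm]
      exact henorm i
    rw [h2] at h1
    simpa using h1
  -- orthonormal family from nonzero singular values
  set S : Set (Fin n) := {i | μ i ≠ 0} with hS
  set g : Fin n → K := fun i => ((Real.sqrt (μ i) : ℝ) : ℂ)⁻¹ • b (e i) with hg
  have hgon : Orthonormal ℂ (S.restrict g) := by
    rw [orthonormal_iff_ite]
    rintro ⟨i, hi⟩ ⟨j, hj⟩
    simp only [Set.restrict_apply, hg]
    show ⟪((Real.sqrt (μ i) : ℝ) : ℂ)⁻¹ • b (e i), ((Real.sqrt (μ j) : ℝ) : ℂ)⁻¹ • b (e j)⟫ = _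
    rw [inner_smul_left, inner_smul_right, hbe i j]
    have hμipos : 0 < μ i := lt_of_le_of_ne (hμ0 i) (Ne.symm hi)
    have hμjpos : 0 < μ j := lt_of_le_of_ne (hμ0 j) (Ne.symm hj)
    by_cases h : i = j
    · subst h
      simp only [if_pos rfl]
      rw [← Complex.ofReal_inv, Complex.conj_ofReal]
      simp only [if_true]
      have hs : Real.sqrt (μ i) * Real.sqrt (μ i) = μ i := Real.mul_self_sqrt (hμ0 i)
      have hsne : Real.sqrt (μ i) ≠ 0 := ne_of_gt (Real.sqrt_pos.mpr hμipos)
      have hreal : (Real.sqrt (μ i))⁻¹ * ((Real.sqrt (μ i))⁻¹ * μ i) = 1 := by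
        field_simp
        nlinarith [hs]
      exact_mod_cast congrArg (fun r : ℝ => (r : ℂ)) hreal
    · have : (⟨i, hi⟩ : S) ≠ ⟨j, hj⟩ := by simpa using h
      rw [if_neg h, if_neg this]
      simp
  have hcard : Module.finrank ℂ K = Fintype.card (Fin n) := by
    simp [hnK]
  obtain ⟨f, hf⟩ := hgon.exists_orthonormalBasis_extension_of_card_eq hcard
  have hfnorm : ∀ i, ‖f i‖ = 1 := fun i => f.orthonormal.1 i
  -- the unitary on K sending e i to f i
  set w : K ≃ₗᵢ[ℂ] K := e.repr.trans f.repr.symm with hw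
  have hwe : ∀ i, w (e i) = f i := by
    intro i
    simp [hw, LinearIsometryEquiv.trans_apply, OrthonormalBasis.repr_self]
  -- the candidate partial isometry
  set v : H →ₗ[ℂ] H := ι₀ ∘ₗ (w.toLinearEquiv : K →ₗ[ℂ] K) ∘ₗ π with hv
  have hvpt : ∀ x, v x = (w (π x) : H) := fun x => rfl
  have hadjv : LinearMap.adjoint v = ι₀ ∘ₗ (w.symm.toLinearEquiv : K →ₗ[ℂ] K) ∘ₗ π := by
    symm
    rw [LinearMap.eq_adjoint_iff]
    intro x y
    have h1 : ((ι₀ ∘ₗ (w.symm.toLinearEquiv : K →ₗ[ℂ] K) ∘ₗ π) x : H) = (w.symm (π x) : H) := rfl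
    rw [h1, hKinner (w.symm (π x)) y]
    have h2 : ⟪w.symm (π x), π y⟫ = ⟪w (w.symm (π x)), w (π y)⟫ := (w.inner_map_map _ _).symm
    rw [h2, w.apply_symm_apply]
    rw [hvpt y]
    exact (hKinner' x (w (π y))).symm
  have hπp : ∀ x, π (p x) = π x := by
    intro x
    apply Subtype.ext
    have h1 : (ι₀ (π (p x)) : H) = p (p x) := hιπ (p x)
    have h2 : (ι₀ (π x) : H) = p x := hιπ x
    rw [hppt] at h1
    exact h1.trans h2.symm
  refine ⟨v, ?_, ?_, ?_, ?_⟩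
  · ext x
    have : (v ∘ₗ LinearMap.adjoint v) x = (w (π (ι₀ (w.symm (π x)))) : H) := by
      rw [hadjv]; rfl
    rw [this, hπι, w.apply_symm_apply]
    exact hιπ x
  · ext x
    have : (LinearMap.adjoint v ∘ₗ v) x = (w.symm (π (ι₀ (w (π x)))) : H) := by
      rw [hadjv]; rfl
    rw [this, hπι, w.symm_apply_apply]
    exact hιπ x
  · ext x
    have h1 : (v ∘ₗ p) x = (w (π (p x)) : H) := rfl
    have h2 : (p ∘ₗ v) x = p (w (π x) : H) := rfl
    rw [h1, h2, hπp, hpfix]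
  -- trace reduction to K
  · have hhs : ∀ s : H →ₗ[ℂ] H, s ∘ₗ p = s →
        hsNormSq s = ∑ i, ‖s (ι₀ (e i))‖ ^ 2 := by
      intro s hs
      have hpfactor : p = ι₀ ∘ₗ π := by ext x; exact (hιπ x).symm
      have hspt : ∀ x, s (p x) = s x := fun x => DFunLike.congr_fun hs x
      have hfact : LinearMap.adjoint s ∘ₗ s = ((LinearMap.adjoint s ∘ₗ s) ∘ₗ ι₀) ∘ₗ π := by
        ext x
        show LinearMap.adjoint s (s x) = LinearMap.adjoint s (s (ι₀ (π x)))
        rw [hιπ, hspt]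
      have htr : LinearMap.trace ℂ H (LinearMap.adjoint s ∘ₗ s)
          = LinearMap.trace ℂ K (π ∘ₗ ((LinearMap.adjoint s ∘ₗ s) ∘ₗ ι₀)) := by
        conv_lhs => rw [hfact]
        exact (LinearMap.trace_comp_comm' ((LinearMap.adjoint s ∘ₗ s) ∘ₗ ι₀) π).symm
      have hterm : ∀ i, ⟪e i, (π ∘ₗ ((LinearMap.adjoint s ∘ₗ s) ∘ₗ ι₀)) (e i)⟫
          = ((‖s (ι₀ (e i))‖ : ℂ)) ^ 2 := by
        intro i
        have h1 : (π ∘ₗ ((LinearMap.adjoint s ∘ₗ s) ∘ₗ ι₀)) (e i)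
            = π (LinearMap.adjoint s (s (ι₀ (e i)))) := rfl
        rw [h1, ← hKinner (e i) (LinearMap.adjoint s (s (ι₀ (e i))))]
        rw [LinearMap.adjoint_inner_right]
        exact inner_self_eq_norm_sq_to_K (𝕜 := ℂ) (s (ι₀ (e i)))
      rw [hsNormSq, htr, trace_eq_sum_inner' e]
      simp only [hterm]
      rw [Complex.re_sum]
      congr 1
      ext i
      norm_cast
    -- the hypothesis sum
    have hs1 : ((LinearMap.id - p) ∘ₗ u ∘ₗ p) ∘ₗ p = (LinearMap.id - p) ∘ₗ u ∘ₗ p := by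
      ext x
      simp [LinearMap.comp_apply, hppt]
    have hsum1 : hsNormSq ((LinearMap.id - p) ∘ₗ u ∘ₗ p) = ∑ i, (1 - μ i) := by
      rw [hhs _ hs1]
      congr 1
      ext i
      have hx1 : ‖(ι₀ (e i) : H)‖ = 1 := (Submodule.coe_norm (e i)).trans (henorm i)
      have hy1 : ‖u (ι₀ (e i))‖ = 1 := by rw [hunorm]; exact hx1
      have h0 : p (ι₀ (e i)) = ι₀ (e i) := hpfix (e i)
      have happ : ((LinearMap.id - p) ∘ₗ u ∘ₗ p) (ι₀ (e i))
          = u (ι₀ (e i)) - p (u (ι₀ (e i))) := by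
        simp [LinearMap.comp_apply, h0]
      rw [happ]
      have hpy : ‖p (u (ι₀ (e i)))‖ ^ 2 = μ i := by
        rw [← hbnorm (e i)]; exact (hμnorm i).symm
      have := hpyth (u (ι₀ (e i)))
      rw [hy1] at this
      linarith
    -- the inner product lower bound
    have hre : ∀ i, μ i ≤ Complex.re ⟪(ι₀ (f i) : H), u (ι₀ (e i))⟫ := by
      intro i
      have hkey : ⟪(ι₀ (f i) : H), u (ι₀ (e i))⟫ = ⟪f i, b (e i)⟫ :=
        hKinner (f i) (u (ι₀ (e i)))
      by_cases hi : i ∈ S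
      · have hfi : f i = g i := hf i hi
        have hμpos : 0 < μ i := lt_of_le_of_ne (hμ0 i) (Ne.symm hi)
        have hbb : ⟪b (e i), b (e i)⟫ = (μ i : ℂ) := by
          rw [hbe i i, if_pos rfl]
        have : ⟪f i, b (e i)⟫ = ((Real.sqrt (μ i))⁻¹ * μ i : ℝ) := by
          rw [hfi, hg]
          simp only []
          rw [inner_smul_left, hbb, ← Complex.ofReal_inv, Complex.conj_ofReal]
          push_cast
          ring
        rw [hkey, this]
        have hsq : (Real.sqrt (μ i))⁻¹ * μ i = Real.sqrt (μ i) := by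
          have hs : Real.sqrt (μ i) * Real.sqrt (μ i) = μ i := Real.mul_self_sqrt (hμ0 i)
          have hsne : Real.sqrt (μ i) ≠ 0 := ne_of_gt (Real.sqrt_pos.mpr hμpos)
          field_simp
          nlinarith [hs]
        rw [hsq, Complex.ofReal_re]
        have hle1 : Real.sqrt (μ i) ≤ 1 := by
          have h3 := Real.sqrt_le_sqrt (hμ1 i)
          rwa [Real.sqrt_one] at h3
        nlinarith [Real.mul_self_sqrt (hμ0 i), Real.sqrt_nonneg (μ i)]
      · have hμz : μ i = 0 := by simpa [hS] using hi
        have hbz : b (e i) = 0 := by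
          have : ‖b (e i)‖ ^ 2 = 0 := by rw [← hμnorm i, hμz]
          have := pow_eq_zero_iff (n := 2) (by norm_num) |>.mp this
          exact norm_eq_zero.mp this
        rw [hkey, hbz, inner_zero_right, hμz]
        simp
    -- the target sum
    have hs2 : ((u - v) ∘ₗ p) ∘ₗ p = (u - v) ∘ₗ p := by
      ext x
      simp [LinearMap.comp_apply, hppt]
    have hsum2 : hsNormSq ((u - v) ∘ₗ p) ≤ ∑ i, (2 - 2 * μ i) := by
      rw [hhs _ hs2]
      apply Finset.sum_le_sum
      intro i _
      have hx1 : ‖(ι₀ (e i) : H)‖ = 1 := (Submodule.coe_norm (e i)).trans (henorm i)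
      have hy1 : ‖u (ι₀ (e i))‖ = 1 := by rw [hunorm]; exact hx1
      have h0 : p (ι₀ (e i)) = ι₀ (e i) := hpfix (e i)
      have happ : ((u - v) ∘ₗ p) (ι₀ (e i)) = u (ι₀ (e i)) - v (ι₀ (e i)) := by
        simp [LinearMap.comp_apply, h0]
      have hvx : v (ι₀ (e i)) = (ι₀ (f i) : H) := by
        rw [hvpt, hπι, hwe]; rfl
      have hvn : ‖v (ι₀ (e i))‖ = 1 := by
        rw [hvx]; exact (Submodule.coe_norm (f i)).trans (hfnorm i)
      rw [happ, @norm_sub_sq ℂ, hy1, hvn]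
      have hresym : RCLike.re ⟪u (ι₀ (e i)), v (ι₀ (e i))⟫
          = Complex.re ⟪(ι₀ (f i) : H), u (ι₀ (e i))⟫ := by
        rw [hvx]
        exact inner_re_symm _ _
      rw [hresym]
      have := hre i
      nlinarith [hre i]
    have hfinal : (∑ i, (2 - 2 * μ i) : ℝ) = 2 * ∑ i, (1 - μ i) := by
      rw [Finset.mul_sum]
      congr 1
      ext i
      ring
    have hdim0 : (0 : ℝ) ≤ δ * Module.finrank ℂ H := by positivity
    calc hsNormSq ((u - v) ∘ₗ p) ≤ ∑ i, (2 - 2 * μ i) := hsum2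
    _ = 2 * ∑ i, (1 - μ i) := hfinal
    _ = 2 * hsNormSq ((LinearMap.id - p) ∘ₗ u ∘ₗ p) := by rw [hsum1]
    _ ≤ 2 * (δ * Module.finrank ℂ H) := by linarith [hinv]
    _ ≤ 4 * δ * Module.finrank ℂ H := by linarith [hdim0]
end
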